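/- With the setting of the Read–Bajraktarević operator, the fixed point g of T satisfies g(x_i) = y_i for all i ∈ {1,…,N}, where data points (x_i, y_i), i = 1,…,N with x_1 < … < x_N are given and the maps satisfy α_n y_1 + q_n(x_1) = y_n, α_n y_N + q_n(x_N) = y_{n+1}. -/
import Mathlib


/-- The fractal interpolation function interpolates the data: `g (x i) = y i`. -/
theorem fif_interpolates (N : ℕ) (hN : 2 ≤ N) (x y : ℕ → ℝ)
    (hx : ∀ i j, i < j → j ≤ N - 1 → x i < x j)
    (L : ℕ → ℝ → ℝ)
    (hL : ∀ n t, L n t = (x (n+1) - x n) / (x (N-1) - x 0) * (t - x 0) + x n)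
    (α : ℕ → ℝ) (r : ℝ) (hr : r < 1) (hα : ∀ n, n ≤ N - 2 → |α n| ≤ r)
    (q : ℕ → ℝ → ℝ)
    (hmatch1 : ∀ n, n ≤ N - 2 → α n * y 0 + q n (x 0) = y n)
    (hmatch2 : ∀ n, n ≤ N - 2 → α n * y (N-1) + q n (x (N-1)) = y (n+1))
    (g : ℝ → ℝ) (hgc : ContinuousOn g (Set.Icc (x 0) (x (N-1))))
    (hg0 : g (x 0) = y 0) (hgN : g (x (N-1)) = y (N-1))
    (hgfix : ∀ n, n ≤ N - 2 → ∀ t ∈ Set.Icc (x 0) (x (N-1)),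
      g (L n t) = α n * g t + q n t) :
    ∀ i, i ≤ N - 1 → g (x i) = y i := by
  intro i hi
  have hx0N : x 0 ≤ x (N-1) := le_of_lt (hx 0 (N-1) (by omega) le_rfl)
  have hmem : x 0 ∈ Set.Icc (x 0) (x (N-1)) := ⟨le_rfl, hx0N⟩
  rcases Nat.lt_or_ge i (N-1) with h | h
  · have hiN2 : i ≤ N - 2 := by omega
    have := hgfix i hiN2 (x 0) hmem
    have hLi : L i (x 0) = x i := by rw [hL]; ring
    rw [hLi, hg0, hmatch1 i hiN2] at this
    exact this
  · have : i = N - 1 := le_antisymm hi h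
    rw [this, hgN]
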